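/- For every ε > 0 there exists q < 1 such that for all n ≥ 1 and all A ⊆ {0,1}ⁿ with |A| ≥ 2^{qn}, the set B = {σ ∈ {0,1}ⁿ : d(σ, A) > ε} has size at most 2^{qn}, where d is normalized Hamming distance. -/

import Mathlib

open Finset
open scoped Classical

/-- Normalized Hamming distance on `{0,1}ⁿ`. -/
noncomputable def hamD {n : ℕ} (σ τ : Fin n → Bool) : ℝ :=
  ((Finset.univ.filter (fun k => σ k ≠ τ k)).card : ℝ) / n

/-- Two-point Hoeffding inequality. -/
lemma twoPoint (t a b : ℝ) (h : |a - b| ≤ 1) :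
    Real.exp (t * a) + Real.exp (t * b)
      ≤ 2 * Real.exp (t * ((a + b) / 2)) * Real.exp (t ^ 2 / 8) := by
  have key : Real.exp (t * a) + Real.exp (t * b)
      = 2 * Real.exp (t * ((a + b) / 2)) * Real.cosh (t * ((a - b) / 2)) := by
    rw [Real.cosh_eq]
    have e1 : t * a = t * ((a + b) / 2) + t * ((a - b) / 2) := by ring
    have e2 : t * b = t * ((a + b) / 2) + -(t * ((a - b) / 2)) := by ring
    rw [e1, e2, Real.exp_add, Real.exp_add]
    ring
  rw [key]
  have h1 : Real.cosh (t * ((a - b) / 2)) ≤ Real.exp (t ^ 2 / 8) := by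
    refine (Real.cosh_le_exp_half_sq _).trans (Real.exp_le_exp.2 ?_)
    have h2 : (t * ((a - b) / 2)) ^ 2 ≤ t ^ 2 / 4 := by
      have : (a - b) ^ 2 ≤ 1 := by
        have := abs_nonneg (a - b)
        nlinarith [sq_abs (a - b), sq_nonneg (|a - b| - 1)]
      nlinarith [sq_nonneg t]
    linarith
  have h3 : 0 ≤ 2 * Real.exp (t * ((a + b) / 2)) := by positivity
  exact mul_le_mul_of_nonneg_left h1 h3

/-- `f` changes by at most 1 when one coordinate is flipped. -/
def Lip1 {n : ℕ} (f : (Fin n → Bool) → ℝ) : Prop :=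
  ∀ (x : Fin n → Bool) (i : Fin n), |f x - f (Function.update x i (!x i))| ≤ 1

lemma lip_flip {n : ℕ} {f : (Fin n → Bool) → ℝ} (hf : Lip1 f)
    (x : Fin n → Bool) (i : Fin n) (b : Bool) :
    |f x - f (Function.update x i b)| ≤ 1 := by
  by_cases hb : b = x i
  · subst hb; simp [Function.update_eq_self]
  · have : b = !x i := by cases b <;> cases hxi : x i <;> simp_all
    subst this; exact hf x i

/-- Key exponential-moment bound, by induction on the cube dimension. -/
lemma keyBound (t : ℝ) : ∀ (n : ℕ) (f : (Fin n → Bool) → ℝ), Lip1 f →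
    (∑ x : Fin n → Bool, Real.exp (t * f x)) *
      (∑ x : Fin n → Bool, Real.exp (-t * f x))
      ≤ 4 ^ n * Real.exp (t ^ 2 * n / 4) := by
  intro n
  induction n with
  | zero =>
    intro f _
    have : (∑ x : Fin 0 → Bool, Real.exp (t * f x)) *
        (∑ x : Fin 0 → Bool, Real.exp (-t * f x))
        = Real.exp (t * f default) * Real.exp (-t * f default) := by
      rw [Fintype.sum_unique, Fintype.sum_unique]
      rw [Subsingleton.elim (@default (Fin 0 → Bool) Unique.instInhabited) (@default (Fin 0 → Bool) Pi.instInhabited)]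
    rw [this, ← Real.exp_add]
    norm_num
  | succ n ih =>
    intro f hf
    set f0 : (Fin n → Bool) → ℝ := fun x' => f (Fin.cons false x') with hf0
    set f1 : (Fin n → Bool) → ℝ := fun x' => f (Fin.cons true x') with hf1
    set g : (Fin n → Bool) → ℝ := fun x' => (f0 x' + f1 x') / 2 with hg
    -- difference of the two slices
    have hdiff : ∀ x' : Fin n → Bool, |f0 x' - f1 x'| ≤ 1 := by
      intro x'
      have := lip_flip hf (Fin.cons false x') 0 true
      rwa [Fin.update_cons_zero] at this
    -- g is Lipschitz
    have hgl : Lip1 g := by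
      intro x' i
      have h0 := lip_flip hf (Fin.cons false x') i.succ (!x' i)
      have h1 := lip_flip hf (Fin.cons true x') i.succ (!x' i)
      rw [← Fin.cons_update] at h0 h1
      have hx : (Fin.cons false x' : Fin (n+1) → Bool) i.succ = x' i := Fin.cons_succ _ _ _
      have hy : (Fin.cons true x' : Fin (n+1) → Bool) i.succ = x' i := Fin.cons_succ _ _ _
      simp only [hg, hf0, hf1]
      rw [abs_le] at h0 h1 ⊢
      constructor <;> linarith [h0.1, h0.2, h1.1, h1.2]
    -- sum decomposition
    have hsum : ∀ F : (Fin (n+1) → Bool) → ℝ,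
        (∑ x : Fin (n+1) → Bool, F x)
          = ∑ x' : Fin n → Bool, (F (Fin.cons false x') + F (Fin.cons true x')) := by
      intro F
      rw [← (Fin.consEquiv (fun _ : Fin (n+1) => Bool)).sum_comp F]
      rw [Fintype.sum_prod_type]
      rw [Fintype.sum_bool]
      rw [← Finset.sum_add_distrib]
      congr 1; funext x'
      simp [Fin.consEquiv, add_comm]
    have hplus : (∑ x : Fin (n+1) → Bool, Real.exp (t * f x))
        ≤ 2 * Real.exp (t ^ 2 / 8) * ∑ x' : Fin n → Bool, Real.exp (t * g x') := by
      rw [hsum, Finset.mul_sum]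
      refine Finset.sum_le_sum fun x' _ => ?_
      have := twoPoint t (f0 x') (f1 x') (hdiff x')
      calc Real.exp (t * f0 x') + Real.exp (t * f1 x')
          ≤ 2 * Real.exp (t * ((f0 x' + f1 x') / 2)) * Real.exp (t ^ 2 / 8) := this
        _ = 2 * Real.exp (t ^ 2 / 8) * Real.exp (t * g x') := by rw [hg]; ring
    have hminus : (∑ x : Fin (n+1) → Bool, Real.exp (-t * f x))
        ≤ 2 * Real.exp (t ^ 2 / 8) * ∑ x' : Fin n → Bool, Real.exp (-t * g x') := by
      rw [hsum, Finset.mul_sum]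
      refine Finset.sum_le_sum fun x' _ => ?_
      have := twoPoint (-t) (f0 x') (f1 x') (hdiff x')
      calc Real.exp (-t * f0 x') + Real.exp (-t * f1 x')
          ≤ 2 * Real.exp (-t * ((f0 x' + f1 x') / 2)) * Real.exp ((-t) ^ 2 / 8) := this
        _ = 2 * Real.exp (t ^ 2 / 8) * Real.exp (-t * g x') := by
            rw [hg]; ring_nf
    have hIH := ih g hgl
    have hp0 : (0:ℝ) ≤ ∑ x : Fin (n+1) → Bool, Real.exp (t * f x) :=
      Finset.sum_nonneg fun _ _ => (Real.exp_pos _).le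
    have hm0 : (0:ℝ) ≤ ∑ x : Fin (n+1) → Bool, Real.exp (-t * f x) :=
      Finset.sum_nonneg fun _ _ => (Real.exp_pos _).le
    have hq0 : (0:ℝ) ≤ 2 * Real.exp (t ^ 2 / 8) * ∑ x' : Fin n → Bool, Real.exp (-t * g x') := by
      positivity
    calc (∑ x : Fin (n+1) → Bool, Real.exp (t * f x)) *
          (∑ x : Fin (n+1) → Bool, Real.exp (-t * f x))
        ≤ (2 * Real.exp (t ^ 2 / 8) * ∑ x' : Fin n → Bool, Real.exp (t * g x')) *
          (2 * Real.exp (t ^ 2 / 8) * ∑ x' : Fin n → Bool, Real.exp (-t * g x')) := by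
          exact mul_le_mul hplus hminus hm0 (by positivity)
      _ = 4 * Real.exp (t ^ 2 / 4) *
          ((∑ x' : Fin n → Bool, Real.exp (t * g x')) *
            (∑ x' : Fin n → Bool, Real.exp (-t * g x'))) := by
          have h48 : Real.exp (t ^ 2 / 8) * Real.exp (t ^ 2 / 8) = Real.exp (t ^ 2 / 4) := by
            rw [← Real.exp_add]; ring_nf
          rw [← h48]; ring
      _ ≤ 4 * Real.exp (t ^ 2 / 4) * (4 ^ n * Real.exp (t ^ 2 * n / 4)) := by
          refine mul_le_mul_of_nonneg_left hIH (by positivity)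
      _ = 4 ^ (n+1) * Real.exp (t ^ 2 * ((n+1 : ℕ) : ℝ) / 4) := by
          push_cast
          rw [show t ^ 2 * ((n : ℝ) + 1) / 4 = t ^ 2 / 4 + t ^ 2 * (n : ℝ) / 4 from by ring,
            Real.exp_add]
          ring

theorem stmt14 (ε : ℝ) (hε : 0 < ε) :
    ∃ q : ℝ, q < 1 ∧ ∀ n : ℕ, 1 ≤ n → ∀ A : Finset (Fin n → Bool),
      (2 : ℝ) ^ (q * n) ≤ A.card →
      (((Finset.univ.filter (fun σ : Fin n → Bool => ∀ τ ∈ A, ε < hamD σ τ)).card : ℝ)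
        ≤ (2 : ℝ) ^ (q * n)) := by
  have hlog : (0:ℝ) < Real.log 2 := Real.log_pos (by norm_num)
  have hq1 : (0:ℝ) < ε ^ 2 / (2 * Real.log 2) := div_pos (pow_pos hε 2) (by positivity)
  refine ⟨1 - ε ^ 2 / (2 * Real.log 2), by linarith, ?_⟩
  intro n hn A hA
  set q : ℝ := 1 - ε ^ 2 / (2 * Real.log 2) with hqdef
  set B : Finset (Fin n → Bool) :=
    Finset.univ.filter (fun σ : Fin n → Bool => ∀ τ ∈ A, ε < hamD σ τ) with hBdef
  have hnR : (0:ℝ) < n := by exact_mod_cast hn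
  have hQpos : (0:ℝ) < (2:ℝ) ^ (q * n) := Real.rpow_pos_of_pos (by norm_num) _
  have hAne : A.Nonempty := by
    rw [← Finset.card_pos]
    exact_mod_cast hQpos.trans_le hA
  -- the distance-to-A function
  set f : (Fin n → Bool) → ℝ :=
    fun x => A.inf' hAne (fun τ => (hammingDist x τ : ℝ)) with hfdef
  have hf_le : ∀ (x : Fin n → Bool) (τ) (_ : τ ∈ A), f x ≤ hammingDist x τ :=
    fun x τ hτ => Finset.inf'_le _ hτ
  have hf_nonneg : ∀ x, 0 ≤ f x := by
    intro x
    apply Finset.le_inf'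
    intro τ _
    positivity
  have hf_zero : ∀ x ∈ A, f x = 0 := by
    intro x hx
    refine le_antisymm ?_ (hf_nonneg x)
    have := hf_le x x hx
    simpa using this
  -- Lipschitz
  have hlip : Lip1 f := by
    intro x i
    set y := Function.update x i (!x i) with hy
    have hxy : hammingDist x y = 1 := by
      have hset : ({k | x k ≠ y k} : Finset (Fin n)) = {i} := by
        ext k
        by_cases hk : k = i
        · subst hk
          simp [hy, Function.update_self]
        · simp [hy, Function.update_of_ne hk, hk]
      rw [hammingDist, hset, Finset.card_singleton]
    have h1 : f x ≤ f y + 1 := by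
      obtain ⟨τ₀, hτ₀, hfy⟩ := Finset.exists_mem_eq_inf' hAne (fun τ => (hammingDist y τ : ℝ))
      have : f x ≤ hammingDist x τ₀ := hf_le x τ₀ hτ₀
      have htri : (hammingDist x τ₀ : ℝ) ≤ (hammingDist x y : ℝ) + hammingDist y τ₀ := by
        exact_mod_cast hammingDist_triangle x y τ₀
      rw [hxy] at htri
      have : f y = (hammingDist y τ₀ : ℝ) := hfy
      push_cast at htri
      linarith [hf_le x τ₀ hτ₀]
    have h2 : f y ≤ f x + 1 := by
      obtain ⟨τ₀, hτ₀, hfx⟩ := Finset.exists_mem_eq_inf' hAne (fun τ => (hammingDist x τ : ℝ))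
      have htri : (hammingDist y τ₀ : ℝ) ≤ (hammingDist y x : ℝ) + hammingDist x τ₀ := by
        exact_mod_cast hammingDist_triangle y x τ₀
      rw [hammingDist_comm y x, hxy] at htri
      push_cast at htri
      linarith [hf_le y τ₀ hτ₀]
    rw [abs_le]
    constructor <;> linarith
  -- far points
  have hf_far : ∀ x ∈ B, ε * n < f x := by
    intro x hx
    rw [hBdef, Finset.mem_filter] at hx
    rw [hfdef]
    rw [Finset.lt_inf'_iff]
    intro τ hτ
    have hτ' := hx.2 τ hτ
    rw [hamD] at hτ'
    have hcard : ((Finset.univ.filter (fun k => x k ≠ τ k)).card : ℝ) = (hammingDist x τ : ℝ) := by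
      norm_cast
    rw [hcard] at hτ'
    calc ε * n < (hammingDist x τ : ℝ) / n * n := by
          exact mul_lt_mul_of_pos_right hτ' hnR
      _ = (hammingDist x τ : ℝ) := by field_simp
  -- apply the key exponential bound with t = 2ε
  have hkey := keyBound (2*ε) n f hlip
  set Sp := ∑ x : Fin n → Bool, Real.exp (2*ε * f x) with hSp
  set Sm := ∑ x : Fin n → Bool, Real.exp (-(2*ε) * f x) with hSm
  have hSpnonneg : (0:ℝ) ≤ Sp := Finset.sum_nonneg fun _ _ => (Real.exp_pos _).le
  have hAle : (A.card : ℝ) ≤ Sm := by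
    calc (A.card : ℝ) = ∑ _x ∈ A, (1:ℝ) := by simp
      _ = ∑ x ∈ A, Real.exp (-(2*ε) * f x) :=
          Finset.sum_congr rfl (fun x hx => by rw [hf_zero x hx, mul_zero, Real.exp_zero])
      _ ≤ Sm := Finset.sum_le_sum_of_subset_of_nonneg (Finset.subset_univ A)
            (fun _ _ _ => (Real.exp_pos _).le)
  have hBle : (B.card : ℝ) * Real.exp (2*ε*(ε*n)) ≤ Sp := by
    calc (B.card : ℝ) * Real.exp (2*ε*(ε*n)) = ∑ _x ∈ B, Real.exp (2*ε*(ε*n)) := by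
          rw [Finset.sum_const, nsmul_eq_mul]
      _ ≤ ∑ x ∈ B, Real.exp (2*ε * f x) := Finset.sum_le_sum fun x hx =>
          Real.exp_le_exp.2 (by have := hf_far x hx; nlinarith)
      _ ≤ Sp := Finset.sum_le_sum_of_subset_of_nonneg (Finset.subset_univ B)
            (fun _ _ _ => (Real.exp_pos _).le)
  have hcomb : (B.card : ℝ) * Real.exp (2*ε*(ε*n)) * (2:ℝ)^(q*(n:ℝ))
      ≤ 4 ^ n * Real.exp ((2*ε)^2 * n / 4) := by
    calc (B.card : ℝ) * Real.exp (2*ε*(ε*n)) * (2:ℝ)^(q*(n:ℝ))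
        ≤ Sp * (A.card : ℝ) := by
          refine mul_le_mul hBle hA (le_of_lt hQpos) hSpnonneg
      _ ≤ Sp * Sm := mul_le_mul_of_nonneg_left hAle hSpnonneg
      _ ≤ _ := hkey
  have hlogne : Real.log 2 ≠ 0 := ne_of_gt hlog
  have h2q : (2:ℝ)^(q*(n:ℝ)) = Real.exp (Real.log 2 * (q*(n:ℝ))) :=
    Real.rpow_def_of_pos (by norm_num) _
  have h4 : (4:ℝ)^n = Real.exp ((n:ℝ) * (2 * Real.log 2)) := by
    rw [← Real.exp_log (show (0:ℝ) < 4 by norm_num), ← Real.exp_nat_mul]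
    congr 1
    rw [show (4:ℝ) = 2^(2:ℕ) by norm_num, Real.log_pow]
    push_cast; ring
  have heq : (2:ℝ)^(q*(n:ℝ)) * (Real.exp (2*ε*(ε*n)) * (2:ℝ)^(q*(n:ℝ)))
      = 4 ^ n * Real.exp ((2*ε)^2 * n / 4) := by
    rw [h2q, h4, ← Real.exp_add, ← Real.exp_add, ← Real.exp_add]
    congr 1
    rw [hqdef]
    field_simp
    ring
  have hmain : (B.card : ℝ) * (Real.exp (2*ε*(ε*n)) * (2:ℝ)^(q*(n:ℝ)))
      ≤ (2:ℝ)^(q*(n:ℝ)) * (Real.exp (2*ε*(ε*n)) * (2:ℝ)^(q*(n:ℝ))) := by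
    rw [heq, ← mul_assoc]
    exact hcomb
  have hXpos : (0:ℝ) < Real.exp (2*ε*(ε*n)) * (2:ℝ)^(q*(n:ℝ)) := by positivity
  exact le_of_mul_le_mul_right hmain hXpos
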